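/- Let a<b be real numbers and let ρ,σ:[a,b]→ℝ be continuous. Let U⊆ℝ be an open set and let u,v:ℝ²→ℂ be twice continuously differentiable functions satisfying ρ(x)∂ₜ²u(t,x)+σ(x)∂ₜu(t,x)−∂ₓ²u(t,x)=0 and ρ(x)∂ₜ²v(t,x)+σ(x)∂ₜv(t,x)−∂ₓ²v(t,x)=0 for all t∈U and x∈[a,b]. Define I(t,s)=∫ₐᵇ(ρ(x)·∂ₜu(t,x)·∂ₜv(s,x)−∂ₓu(t,x)·∂ₓv(s,x))dx for t,s∈U. Then I is differentiable in each variable and for all t,s∈U one has ∂ₜI(t,s)−∂ₛI(t,s) = [∂ₓu(t,b)·∂ₜv(s,b)−∂ₜu(t,b)·∂ₓv(s,b)]−[∂ₓu(t,a)·∂ₜv(s,a)−∂ₜu(t,a)·∂ₓv(s,a)]. -/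

import Mathlib

open MeasureTheory intervalIntegral Metric

/-- Partial derivative in the first (time) variable. -/
noncomputable def dt (f : ℝ → ℝ → ℂ) (t x : ℝ) : ℂ := deriv (fun τ => f τ x) t

/-- Partial derivative in the second (space) variable. -/
noncomputable def dx (f : ℝ → ℝ → ℂ) (t x : ℝ) : ℂ := deriv (fun y => f t y) x

/-- Second partial derivative in time. -/
noncomputable def dtt (f : ℝ → ℝ → ℂ) (t x : ℝ) : ℂ := deriv (fun τ => dt f τ x) t

/-- Second partial derivative in space. -/
noncomputable def dxx (f : ℝ → ℝ → ℂ) (t x : ℝ) : ℂ := deriv (fun y => dx f t y) x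

/-! ### Auxiliary machinery -/

/-- Partial application of the Fréchet derivative in direction `w`. -/
noncomputable def pd (F : ℝ × ℝ → ℂ) (w : ℝ × ℝ) (p : ℝ × ℝ) : ℂ := fderiv ℝ F p w

lemma pd_contDiff {F : ℝ × ℝ → ℂ} (hF : ContDiff ℝ 2 F) (w : ℝ × ℝ) :
    ContDiff ℝ 1 (pd F w) :=
  (hF.fderiv_right (m := 1) (by norm_num)).clm_apply contDiff_const

lemma slice1 {F : ℝ × ℝ → ℂ} (hF : Differentiable ℝ F) (t x : ℝ) :
    HasDerivAt (fun τ => F (τ, x)) (fderiv ℝ F (t, x) (1, 0)) t :=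
  (hF (t, x)).hasFDerivAt.comp_hasDerivAt t ((hasDerivAt_id t).prodMk (hasDerivAt_const t x))

lemma slice2 {F : ℝ × ℝ → ℂ} (hF : Differentiable ℝ F) (t x : ℝ) :
    HasDerivAt (fun y => F (t, y)) (fderiv ℝ F (t, x) (0, 1)) x :=
  (hF (t, x)).hasFDerivAt.comp_hasDerivAt x ((hasDerivAt_const x t).prodMk (hasDerivAt_id x))

lemma pd_fderiv {F : ℝ × ℝ → ℂ} (hF : ContDiff ℝ 2 F) (w p z : ℝ × ℝ) :
    fderiv ℝ (pd F w) p z = fderiv ℝ (fderiv ℝ F) p z w := by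
  have h1 : DifferentiableAt ℝ (fderiv ℝ F) p :=
    ((hF.fderiv_right (m := 1) (by norm_num)).differentiable one_ne_zero) p
  have h2 : HasFDerivAt (pd F w)
      ((ContinuousLinearMap.apply ℝ ℂ w).comp (fderiv ℝ (fderiv ℝ F) p)) p :=
    (ContinuousLinearMap.apply ℝ ℂ w).hasFDerivAt.comp p h1.hasFDerivAt
  rw [h2.fderiv]; rfl

lemma pd_symm {F : ℝ × ℝ → ℂ} (hF : ContDiff ℝ 2 F) (p w₁ w₂ : ℝ × ℝ) :
    fderiv ℝ (pd F w₁) p w₂ = fderiv ℝ (pd F w₂) p w₁ := by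
  rw [pd_fderiv hF, pd_fderiv hF]
  exact second_derivative_symmetric
    (fun y => (hF.differentiable two_ne_zero y).hasFDerivAt)
    (((hF.fderiv_right (m := 1) (by norm_num)).differentiable one_ne_zero p).hasFDerivAt) w₂ w₁

lemma pd2_continuous {F : ℝ × ℝ → ℂ} (hF : ContDiff ℝ 2 F) (w₁ w₂ : ℝ × ℝ) :
    Continuous fun p => fderiv ℝ (pd F w₁) p w₂ :=
  ((pd_contDiff hF w₁).continuous_fderiv one_ne_zero).clm_apply continuous_const

/-- The time partial derivative as a function on the plane. -/
noncomputable def A1 (f : ℝ → ℝ → ℂ) : ℝ × ℝ → ℂ := pd (fun p => f p.1 p.2) (1, 0)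

/-- The space partial derivative as a function on the plane. -/
noncomputable def A2 (f : ℝ → ℝ → ℂ) : ℝ × ℝ → ℂ := pd (fun p => f p.1 p.2) (0, 1)

section API

variable {f : ℝ → ℝ → ℂ}

lemma A1_contDiff (hf : ContDiff ℝ 2 (fun p : ℝ × ℝ => f p.1 p.2)) : ContDiff ℝ 1 (A1 f) := pd_contDiff hf _

lemma A2_contDiff (hf : ContDiff ℝ 2 (fun p : ℝ × ℝ => f p.1 p.2)) : ContDiff ℝ 1 (A2 f) := pd_contDiff hf _

lemma dt_eq (hf : ContDiff ℝ 2 (fun p : ℝ × ℝ => f p.1 p.2)) (t x : ℝ) : dt f t x = A1 f (t, x) :=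
  (slice1 (hf.differentiable two_ne_zero) t x).deriv

lemma dx_eq (hf : ContDiff ℝ 2 (fun p : ℝ × ℝ => f p.1 p.2)) (t x : ℝ) : dx f t x = A2 f (t, x) :=
  (slice2 (hf.differentiable two_ne_zero) t x).deriv

lemma dtt_eq (hf : ContDiff ℝ 2 (fun p : ℝ × ℝ => f p.1 p.2)) (t x : ℝ) : dtt f t x = fderiv ℝ (A1 f) (t, x) (1, 0) := by
  have h : (fun τ => dt f τ x) = fun τ => A1 f (τ, x) := funext fun τ => dt_eq hf τ x
  show deriv (fun τ => dt f τ x) t = _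
  rw [h]
  exact (slice1 ((A1_contDiff hf).differentiable one_ne_zero) t x).deriv

lemma dxx_eq (hf : ContDiff ℝ 2 (fun p : ℝ × ℝ => f p.1 p.2)) (t x : ℝ) : dxx f t x = fderiv ℝ (A2 f) (t, x) (0, 1) := by
  have h : (fun y => dx f t y) = fun y => A2 f (t, y) := funext fun y => dx_eq hf t y
  show deriv (fun y => dx f t y) x = _
  rw [h]
  exact (slice2 ((A2_contDiff hf).differentiable one_ne_zero) t x).deriv

lemma mixed_eq (hf : ContDiff ℝ 2 (fun p : ℝ × ℝ => f p.1 p.2)) (p : ℝ × ℝ) :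
    fderiv ℝ (A2 f) p (1, 0) = fderiv ℝ (A1 f) p (0, 1) :=
  pd_symm hf p (0, 1) (1, 0)

lemma A1_fc (hf : ContDiff ℝ 2 (fun p : ℝ × ℝ => f p.1 p.2)) (w : ℝ × ℝ) : Continuous fun p => fderiv ℝ (A1 f) p w :=
  pd2_continuous hf (1, 0) w

lemma A2_fc (hf : ContDiff ℝ 2 (fun p : ℝ × ℝ => f p.1 p.2)) (w : ℝ × ℝ) : Continuous fun p => fderiv ℝ (A2 f) p w :=
  pd2_continuous hf (0, 1) w

end API

/-- Differentiation under the interval integral for a weighted integrand. -/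
lemma deriv_under {c : ℝ → ℂ} {g g' : ℝ × ℝ → ℂ} {a b t : ℝ} (hab : a ≤ b)
    (hc : ContinuousOn c (Set.Icc a b))
    (hg : Continuous g) (hg' : Continuous g')
    (hd : ∀ τ x, HasDerivAt (fun τ' => g (τ', x)) (g' (τ, x)) τ) :
    HasDerivAt (fun τ => ∫ x in a..b, c x * g (τ, x))
      (∫ x in a..b, c x * g' (t, x)) t := by
  have hsub : Set.uIoc a b ⊆ Set.Icc a b := by
    rw [Set.uIoc_of_le hab]; exact Set.Ioc_subset_Icc_self
  have hI : Set.uIcc a b = Set.Icc a b := Set.uIcc_of_le hab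
  obtain ⟨C, hC⟩ := (isCompact_Icc (a := a) (b := b)).exists_bound_of_continuousOn hc
  obtain ⟨M, hM⟩ := ((isCompact_Icc (a := t - 1) (b := t + 1)).prod
    (isCompact_Icc (a := a) (b := b))).exists_bound_of_continuousOn hg'.continuousOn
  have hC0 : 0 ≤ C := le_trans (norm_nonneg _) (hC a ⟨le_refl a, hab⟩)
  have hcont : ∀ τ, ContinuousOn (fun x => c x * g (τ, x)) (Set.Icc a b) := fun τ =>
    hc.mul ((hg.comp (continuous_const.prodMk continuous_id)).continuousOn)
  have hcont' : ∀ τ, ContinuousOn (fun x => c x * g' (τ, x)) (Set.Icc a b) := fun τ =>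
    hc.mul ((hg'.comp (continuous_const.prodMk continuous_id)).continuousOn)
  have key := intervalIntegral.hasDerivAt_integral_of_dominated_loc_of_deriv_le
    (F := fun τ x => c x * g (τ, x)) (F' := fun τ x => c x * g' (τ, x))
    (bound := fun _ => C * M) (μ := volume) (a := a) (b := b) (x₀ := t) (ball_mem_nhds t one_pos)
    (Filter.Eventually.of_forall fun τ =>
      ((hcont τ).mono hsub).aestronglyMeasurable measurableSet_uIoc)
    ((hI ▸ hcont t).intervalIntegrable)
    (((hcont' t).mono hsub).aestronglyMeasurable measurableSet_uIoc)
    (Filter.Eventually.of_forall fun x hx τ hτ => by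
      have hx' : x ∈ Set.Icc a b := hsub hx
      have hτ' : τ ∈ Set.Icc (t - 1) (t + 1) := by
        rw [Real.ball_eq_Ioo] at hτ; exact Set.Ioo_subset_Icc_self hτ
      calc ‖c x * g' (τ, x)‖ = ‖c x‖ * ‖g' (τ, x)‖ := norm_mul _ _
        _ ≤ C * M := mul_le_mul (hC x hx') (hM (τ, x) ⟨hτ', hx'⟩) (norm_nonneg _) hC0)
    intervalIntegrable_const
    (Filter.Eventually.of_forall fun x _ τ _ => (hd τ x).const_mul (c x))
  exact key.2

/-- The t- and s-derivatives of the wave inner product `I(t,s)` differ only by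
boundary terms: the damping terms cancel. -/
theorem stmt1 (a b : ℝ) (hab : a < b)
    (ρ σ : ℝ → ℝ)
    (hρ : ContinuousOn ρ (Set.Icc a b)) (hσ : ContinuousOn σ (Set.Icc a b))
    (U : Set ℝ) (hU : IsOpen U)
    (u v : ℝ → ℝ → ℂ)
    (hu : ContDiff ℝ 2 (fun p : ℝ × ℝ => u p.1 p.2))
    (hv : ContDiff ℝ 2 (fun p : ℝ × ℝ => v p.1 p.2))
    (hueq : ∀ t ∈ U, ∀ x ∈ Set.Icc a b,
      (ρ x : ℂ) * dtt u t x + (σ x : ℂ) * dt u t x - dxx u t x = 0)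
    (hveq : ∀ t ∈ U, ∀ x ∈ Set.Icc a b,
      (ρ x : ℂ) * dtt v t x + (σ x : ℂ) * dt v t x - dxx v t x = 0)
    (I : ℝ → ℝ → ℂ)
    (hI : ∀ t ∈ U, ∀ s ∈ U,
      I t s = ∫ x in a..b, ((ρ x : ℂ) * dt u t x * dt v s x - dx u t x * dx v s x)) :
    ∀ t ∈ U, ∀ s ∈ U,
      DifferentiableAt ℝ (fun τ => I τ s) t ∧
      DifferentiableAt ℝ (fun τ => I t τ) s ∧
      deriv (fun τ => I τ s) t - deriv (fun τ => I t τ) s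
        = (dx u t b * dt v s b - dt u t b * dx v s b)
          - (dx u t a * dt v s a - dt u t a * dx v s a) := by
  intro t ht s hs
  have hab' : a ≤ b := hab.le
  have hIcc : Set.uIcc a b = Set.Icc a b := Set.uIcc_of_le hab'
  have hcρ : ContinuousOn (fun x => (ρ x : ℂ)) (Set.Icc a b) :=
    Complex.continuous_ofReal.comp_continuousOn hρ
  have lt : Continuous fun x : ℝ => ((t : ℝ), x) := continuous_const.prodMk continuous_id
  have ls : Continuous fun x : ℝ => ((s : ℝ), x) := continuous_const.prodMk continuous_id
  have dA1u : Differentiable ℝ (A1 u) := (A1_contDiff hu).differentiable one_ne_zero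
  have dA2u : Differentiable ℝ (A2 u) := (A2_contDiff hu).differentiable one_ne_zero
  have dA1v : Differentiable ℝ (A1 v) := (A1_contDiff hv).differentiable one_ne_zero
  have dA2v : Differentiable ℝ (A2 v) := (A2_contDiff hv).differentiable one_ne_zero
  have cA1u : Continuous (A1 u) := (A1_contDiff hu).continuous
  have cA2u : Continuous (A2 u) := (A2_contDiff hu).continuous
  have cA1v : Continuous (A1 v) := (A1_contDiff hv).continuous
  have cA2v : Continuous (A2 v) := (A2_contDiff hv).continuous
  have cmono : ∀ {h : ℝ → ℂ}, ContinuousOn h (Set.Icc a b) →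
      IntervalIntegrable h volume a b := fun h => (h.mono hIcc.subset).intervalIntegrable
  -- derivative in the first variable
  have H1 : HasDerivAt
      (fun τ => ∫ x in a..b, (ρ x : ℂ) * (A1 u (τ, x) * A1 v (s, x)))
      (∫ x in a..b, (ρ x : ℂ) * (fderiv ℝ (A1 u) (t, x) (1, 0) * A1 v (s, x))) t :=
    deriv_under (c := fun x => (ρ x : ℂ))
      (g := fun p => A1 u p * A1 v (s, p.2))
      (g' := fun p => fderiv ℝ (A1 u) p (1, 0) * A1 v (s, p.2)) hab' hcρ
      (cA1u.mul (cA1v.comp (continuous_const.prodMk continuous_snd)))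
      ((A1_fc hu (1, 0)).mul (cA1v.comp (continuous_const.prodMk continuous_snd)))
      (fun τ x => (slice1 dA1u τ x).mul_const (A1 v (s, x)))
  have H2 : HasDerivAt
      (fun τ => ∫ x in a..b, (-1 : ℂ) * (A2 u (τ, x) * A2 v (s, x)))
      (∫ x in a..b, (-1 : ℂ) * (fderiv ℝ (A2 u) (t, x) (1, 0) * A2 v (s, x))) t :=
    deriv_under (c := fun _ => (-1 : ℂ))
      (g := fun p => A2 u p * A2 v (s, p.2))
      (g' := fun p => fderiv ℝ (A2 u) p (1, 0) * A2 v (s, p.2)) hab' continuousOn_const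
      (cA2u.mul (cA2v.comp (continuous_const.prodMk continuous_snd)))
      ((A2_fc hu (1, 0)).mul (cA2v.comp (continuous_const.prodMk continuous_snd)))
      (fun τ x => (slice1 dA2u τ x).mul_const (A2 v (s, x)))
  have i1 : ∀ τ : ℝ, IntervalIntegrable
      (fun x => (ρ x : ℂ) * (A1 u (τ, x) * A1 v (s, x))) volume a b := fun τ =>
    cmono (hcρ.mul (((cA1u.comp (continuous_const.prodMk continuous_id)).mul
      (cA1v.comp ls)).continuousOn))
  have i2 : ∀ τ : ℝ, IntervalIntegrable
      (fun x => (-1 : ℂ) * (A2 u (τ, x) * A2 v (s, x))) volume a b := fun τ =>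
    (continuous_const.mul ((cA2u.comp (continuous_const.prodMk continuous_id)).mul
      (cA2v.comp ls))).intervalIntegrable _ _
  have hIev : (fun τ => I τ s) =ᶠ[nhds t]
      (fun τ => (∫ x in a..b, (ρ x : ℂ) * (A1 u (τ, x) * A1 v (s, x)))
        + ∫ x in a..b, (-1 : ℂ) * (A2 u (τ, x) * A2 v (s, x))) := by
    filter_upwards [hU.mem_nhds ht] with τ hτ
    rw [hI τ hτ s hs, ← intervalIntegral.integral_add (i1 τ) (i2 τ)]
    exact intervalIntegral.integral_congr fun x _ => by
      rw [dt_eq hu, dx_eq hu, dt_eq hv, dx_eq hv]; ring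
  have HDt : HasDerivAt (fun τ => I τ s)
      ((∫ x in a..b, (ρ x : ℂ) * (fderiv ℝ (A1 u) (t, x) (1, 0) * A1 v (s, x)))
        + ∫ x in a..b, (-1 : ℂ) * (fderiv ℝ (A2 u) (t, x) (1, 0) * A2 v (s, x))) t :=
    (H1.add H2).congr_of_eventuallyEq hIev
  -- derivative in the second variable
  have H3 : HasDerivAt
      (fun σ' => ∫ x in a..b, (ρ x : ℂ) * (A1 u (t, x) * A1 v (σ', x)))
      (∫ x in a..b, (ρ x : ℂ) * (A1 u (t, x) * fderiv ℝ (A1 v) (s, x) (1, 0))) s :=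
    deriv_under (c := fun x => (ρ x : ℂ))
      (g := fun p => A1 u (t, p.2) * A1 v p)
      (g' := fun p => A1 u (t, p.2) * fderiv ℝ (A1 v) p (1, 0)) hab' hcρ
      ((cA1u.comp (continuous_const.prodMk continuous_snd)).mul cA1v)
      ((cA1u.comp (continuous_const.prodMk continuous_snd)).mul (A1_fc hv (1, 0)))
      (fun σ' x => (slice1 dA1v σ' x).const_mul (A1 u (t, x)))
  have H4 : HasDerivAt
      (fun σ' => ∫ x in a..b, (-1 : ℂ) * (A2 u (t, x) * A2 v (σ', x)))
      (∫ x in a..b, (-1 : ℂ) * (A2 u (t, x) * fderiv ℝ (A2 v) (s, x) (1, 0))) s :=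
    deriv_under (c := fun _ => (-1 : ℂ))
      (g := fun p => A2 u (t, p.2) * A2 v p)
      (g' := fun p => A2 u (t, p.2) * fderiv ℝ (A2 v) p (1, 0)) hab' continuousOn_const
      ((cA2u.comp (continuous_const.prodMk continuous_snd)).mul cA2v)
      ((cA2u.comp (continuous_const.prodMk continuous_snd)).mul (A2_fc hv (1, 0)))
      (fun σ' x => (slice1 dA2v σ' x).const_mul (A2 u (t, x)))
  have i3 : ∀ σ' : ℝ, IntervalIntegrable
      (fun x => (ρ x : ℂ) * (A1 u (t, x) * A1 v (σ', x))) volume a b := fun σ' =>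
    cmono (hcρ.mul (((cA1u.comp lt).mul
      (cA1v.comp (continuous_const.prodMk continuous_id))).continuousOn))
  have i4 : ∀ σ' : ℝ, IntervalIntegrable
      (fun x => (-1 : ℂ) * (A2 u (t, x) * A2 v (σ', x))) volume a b := fun σ' =>
    (continuous_const.mul ((cA2u.comp lt).mul
      (cA2v.comp (continuous_const.prodMk continuous_id)))).intervalIntegrable _ _
  have hIev' : (fun σ' => I t σ') =ᶠ[nhds s]
      (fun σ' => (∫ x in a..b, (ρ x : ℂ) * (A1 u (t, x) * A1 v (σ', x)))
        + ∫ x in a..b, (-1 : ℂ) * (A2 u (t, x) * A2 v (σ', x))) := by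
    filter_upwards [hU.mem_nhds hs] with σ' hσ'
    rw [hI t ht σ' hσ', ← intervalIntegral.integral_add (i3 σ') (i4 σ')]
    exact intervalIntegral.integral_congr fun x _ => by
      rw [dt_eq hu, dx_eq hu, dt_eq hv, dx_eq hv]; ring
  have HDs : HasDerivAt (fun σ' => I t σ')
      ((∫ x in a..b, (ρ x : ℂ) * (A1 u (t, x) * fderiv ℝ (A1 v) (s, x) (1, 0)))
        + ∫ x in a..b, (-1 : ℂ) * (A2 u (t, x) * fderiv ℝ (A2 v) (s, x) (1, 0))) s :=
    (H3.add H4).congr_of_eventuallyEq hIev'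
  refine ⟨HDt.differentiableAt, HDs.differentiableAt, ?_⟩
  rw [HDt.deriv, HDs.deriv]
  -- integrabilities of the four derivative integrands
  have jP1 : IntervalIntegrable
      (fun x => (ρ x : ℂ) * (fderiv ℝ (A1 u) (t, x) (1, 0) * A1 v (s, x))) volume a b :=
    cmono (hcρ.mul ((((A1_fc hu (1, 0)).comp lt).mul (cA1v.comp ls)).continuousOn))
  have jP2 : IntervalIntegrable
      (fun x => (-1 : ℂ) * (fderiv ℝ (A2 u) (t, x) (1, 0) * A2 v (s, x))) volume a b :=
    (continuous_const.mul (((A2_fc hu (1, 0)).comp lt).mul (cA2v.comp ls))).intervalIntegrable _ _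
  have jQ1 : IntervalIntegrable
      (fun x => (ρ x : ℂ) * (A1 u (t, x) * fderiv ℝ (A1 v) (s, x) (1, 0))) volume a b :=
    cmono (hcρ.mul (((cA1u.comp lt).mul ((A1_fc hv (1, 0)).comp ls)).continuousOn))
  have jQ2 : IntervalIntegrable
      (fun x => (-1 : ℂ) * (A2 u (t, x) * fderiv ℝ (A2 v) (s, x) (1, 0))) volume a b :=
    (continuous_const.mul ((cA2u.comp lt).mul ((A2_fc hv (1, 0)).comp ls))).intervalIntegrable _ _
  have step :
      ((∫ x in a..b, (ρ x : ℂ) * (fderiv ℝ (A1 u) (t, x) (1, 0) * A1 v (s, x)))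
        + ∫ x in a..b, (-1 : ℂ) * (fderiv ℝ (A2 u) (t, x) (1, 0) * A2 v (s, x)))
      - ((∫ x in a..b, (ρ x : ℂ) * (A1 u (t, x) * fderiv ℝ (A1 v) (s, x) (1, 0)))
        + ∫ x in a..b, (-1 : ℂ) * (A2 u (t, x) * fderiv ℝ (A2 v) (s, x) (1, 0)))
      = ∫ x in a..b,
          ((ρ x : ℂ) * (fderiv ℝ (A1 u) (t, x) (1, 0) * A1 v (s, x))
            + (-1 : ℂ) * (fderiv ℝ (A2 u) (t, x) (1, 0) * A2 v (s, x))
          - ((ρ x : ℂ) * (A1 u (t, x) * fderiv ℝ (A1 v) (s, x) (1, 0))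
            + (-1 : ℂ) * (A2 u (t, x) * fderiv ℝ (A2 v) (s, x) (1, 0)))) := by
    rw [← intervalIntegral.integral_add jP1 jP2, ← intervalIntegral.integral_add jQ1 jQ2]
    exact (intervalIntegral.integral_sub (jP1.add jP2) (jQ1.add jQ2)).symm
  rw [step]
  have congr1 :
      (∫ x in a..b,
          ((ρ x : ℂ) * (fderiv ℝ (A1 u) (t, x) (1, 0) * A1 v (s, x))
            + (-1 : ℂ) * (fderiv ℝ (A2 u) (t, x) (1, 0) * A2 v (s, x))
          - ((ρ x : ℂ) * (A1 u (t, x) * fderiv ℝ (A1 v) (s, x) (1, 0))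
            + (-1 : ℂ) * (A2 u (t, x) * fderiv ℝ (A2 v) (s, x) (1, 0)))))
      = ∫ x in a..b,
          (fderiv ℝ (A2 u) (t, x) (0, 1) * A1 v (s, x)
            + A2 u (t, x) * fderiv ℝ (A1 v) (s, x) (0, 1)
          - (fderiv ℝ (A1 u) (t, x) (0, 1) * A2 v (s, x)
            + A1 u (t, x) * fderiv ℝ (A2 v) (s, x) (0, 1))) := by
    apply intervalIntegral.integral_congr
    intro x hx
    have hx' : x ∈ Set.Icc a b := hIcc ▸ hx
    have e1 := hueq t ht x hx'
    rw [dtt_eq hu, dt_eq hu, dxx_eq hu] at e1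
    have e2 := hveq s hs x hx'
    rw [dtt_eq hv, dt_eq hv, dxx_eq hv] at e2
    have e3 := mixed_eq hu (t, x)
    have e4 := mixed_eq hv (s, x)
    linear_combination A1 v (s, x) * e1 - A1 u (t, x) * e2
      - A2 v (s, x) * e3 + A2 u (t, x) * e4
  rw [congr1]
  have hWint : IntervalIntegrable
      (fun x => fderiv ℝ (A2 u) (t, x) (0, 1) * A1 v (s, x)
        + A2 u (t, x) * fderiv ℝ (A1 v) (s, x) (0, 1)
        - (fderiv ℝ (A1 u) (t, x) (0, 1) * A2 v (s, x)
          + A1 u (t, x) * fderiv ℝ (A2 v) (s, x) (0, 1))) volume a b :=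
    (((((A2_fc hu (0, 1)).comp lt).mul (cA1v.comp ls)).add
      ((cA2u.comp lt).mul ((A1_fc hv (0, 1)).comp ls))).sub
      ((((A1_fc hu (0, 1)).comp lt).mul (cA2v.comp ls)).add
        ((cA1u.comp lt).mul ((A2_fc hv (0, 1)).comp ls)))).intervalIntegrable _ _
  have FTC :
      (∫ x in a..b,
          (fderiv ℝ (A2 u) (t, x) (0, 1) * A1 v (s, x)
            + A2 u (t, x) * fderiv ℝ (A1 v) (s, x) (0, 1)
          - (fderiv ℝ (A1 u) (t, x) (0, 1) * A2 v (s, x)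
            + A1 u (t, x) * fderiv ℝ (A2 v) (s, x) (0, 1))))
      = (A2 u (t, b) * A1 v (s, b) - A1 u (t, b) * A2 v (s, b))
        - (A2 u (t, a) * A1 v (s, a) - A1 u (t, a) * A2 v (s, a)) :=
    intervalIntegral.integral_eq_sub_of_hasDerivAt
      (f := fun y => A2 u (t, y) * A1 v (s, y) - A1 u (t, y) * A2 v (s, y))
      (fun y _ => ((slice2 dA2u t y).mul (slice2 dA1v s y)).sub
        ((slice2 dA1u t y).mul (slice2 dA2v s y)))
      hWint
  rw [FTC]
  simp only [dt_eq hu, dx_eq hu, dt_eq hv, dx_eq hv]
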